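/- There exists a matching instance admitting an iEF lottery but admitting no min-max-share (mMS) allocation. Specifically, for the instance with valuations v_1 = (1/3, 2/3, 0), v_2 = (0, 1/2, 1/2), v_3 = (0, 1/2, 1/2) over items (a,b,c), the min-max shares are τ_1 = 2/3, τ_2 = 1/2, τ_3 = 1/2, and no matching gives every agent i value at least τ_i, while the lottery over matchings (a,b,c) and (a,c,b) with probability 1/2 each is iEF. -/

import Mathlib

open Finset

/-- Probability that agent `i` receives item `j` under a lottery `x` over matchings. -/
def prMatch {n : ℕ} (x : Equiv.Perm (Fin n) → ℝ) (i j : Fin n) : ℝ :=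
  ∑ b ∈ Finset.univ.filter (fun b : Equiv.Perm (Fin n) => b i = j), x b

/-- Interim envy-freeness of a lottery over matchings: for all agents `i ≠ k` and every
item `j` received by `i` with positive probability, `v_i(j) ≥ E[v_i(b(k)) | b(i) = j]`
(stated multiplied through by the positive probability `Pr[b(i) = j]`). -/
def MIEF {n : ℕ} (v : Fin n → Fin n → ℝ) (x : Equiv.Perm (Fin n) → ℝ) : Prop :=
  ∀ i k : Fin n, i ≠ k → ∀ j : Fin n, 0 < prMatch x i j →
    (∑ b ∈ Finset.univ.filter (fun b : Equiv.Perm (Fin n) => b i = j), x b * v i (b k))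
      ≤ v i j * prMatch x i j
/-- Value of agent `i` for a bundle `S` of items (additive valuations). -/
def bundleVal {n m : ℕ} (v : Fin n → Fin m → ℝ) (i : Fin n) (S : Finset (Fin m)) : ℝ :=
  ∑ j ∈ S, v i j

/-- An allocation is a partition of the items into bundles, one per agent. -/
def IsPartition {n m : ℕ} (a : Fin n → Finset (Fin m)) : Prop :=
  (∀ i k : Fin n, i ≠ k → Disjoint (a i) (a k)) ∧ ∀ j : Fin m, ∃ i, j ∈ a i

/-- Valuations of the instance: items (a,b,c) = (0,1,2). -/
noncomputable def v7 : Fin 3 → Fin 3 → ℝ :=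
  ![![1/3, 2/3, 0], ![0, 1/2, 1/2], ![0, 1/2, 1/2]]

/-- The claimed min-max shares τ. -/
noncomputable def tau7 : Fin 3 → ℝ := ![2/3, 1/2, 1/2]

/-- The lottery returning matchings (a,b,c) and (a,c,b) with probability 1/2 each. -/
noncomputable def lot7 : Equiv.Perm (Fin 3) → ℝ := fun b =>
  if b = Equiv.refl (Fin 3) ∨ b = Equiv.swap 1 2 then 1/2 else 0


lemma sum_perm3 (f : Equiv.Perm (Fin 3) → ℝ)
    (h : ∀ b, b ≠ Equiv.refl (Fin 3) → b ≠ Equiv.swap 1 2 → f b = 0) :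
    ∑ b, f b = f (Equiv.refl (Fin 3)) + f (Equiv.swap 1 2) := by
  refine Finset.sum_eq_add_of_mem _ _ (mem_univ _) (mem_univ _) (by decide) ?_
  intro c _ hc
  exact h c hc.1 hc.2

lemma lot7_refl : lot7 (Equiv.refl (Fin 3)) = 1/2 := by simp [lot7]

lemma lot7_swap : lot7 (Equiv.swap 1 2 : Equiv.Perm (Fin 3)) = 1/2 := by simp [lot7]

lemma lot7_zero (b : Equiv.Perm (Fin 3)) (h1 : b ≠ Equiv.refl (Fin 3))
    (h2 : b ≠ Equiv.swap 1 2) : lot7 b = 0 := by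
  simp [lot7, h1, h2]

lemma filt_sum (i j : Fin 3) (g : Equiv.Perm (Fin 3) → ℝ) :
    ∑ b ∈ Finset.univ.filter (fun b : Equiv.Perm (Fin 3) => b i = j), lot7 b * g b
      = (if (Equiv.refl (Fin 3)) i = j then (1/2) * g (Equiv.refl (Fin 3)) else 0)
      + (if (Equiv.swap 1 2 : Equiv.Perm (Fin 3)) i = j then
          (1/2) * g (Equiv.swap 1 2) else 0) := by
  rw [Finset.sum_filter]
  rw [sum_perm3 (fun b => if b i = j then lot7 b * g b else 0)
    (by intro b h1 h2; simp [lot7_zero b h1 h2])]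
  rw [lot7_refl, lot7_swap]

lemma prMatch_eq (i j : Fin 3) :
    prMatch lot7 i j
      = (if (Equiv.refl (Fin 3)) i = j then (1/2 : ℝ) else 0)
      + (if (Equiv.swap 1 2 : Equiv.Perm (Fin 3)) i = j then (1/2 : ℝ) else 0) := by
  have := filt_sum i j (fun _ => 1)
  simpa [prMatch] using this

lemma sw0 : (Equiv.swap 1 2 : Equiv.Perm (Fin 3)) 0 = 0 := by decide
lemma sw1 : (Equiv.swap 1 2 : Equiv.Perm (Fin 3)) 1 = 2 := by decide
lemma sw2 : (Equiv.swap 1 2 : Equiv.Perm (Fin 3)) 2 = 1 := by decide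

/-- in this instance the min-max shares are (2/3, 1/2, 1/2) — i.e. τ_i is
simultaneously achievable as a max over bundles of some allocation and is a lower bound
on the max over bundles of every allocation — no matching gives every agent her min-max
share, yet the lottery over (a,b,c) and (a,c,b) is interim envy-free. -/
theorem iEF_without_mMS :
    (∀ i : Fin 3,
      (∃ A : Fin 3 → Finset (Fin 3), IsPartition A ∧
        ∀ j : Fin 3, bundleVal v7 i (A j) ≤ tau7 i) ∧
      (∀ A : Fin 3 → Finset (Fin 3), IsPartition A →
        ∃ j : Fin 3, tau7 i ≤ bundleVal v7 i (A j))) ∧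
    (∀ b : Equiv.Perm (Fin 3), ∃ i : Fin 3, v7 i (b i) < tau7 i) ∧
    (∀ b, 0 ≤ lot7 b) ∧ (∑ b, lot7 b = 1) ∧ MIEF v7 lot7 := by
  have vnn : ∀ i j : Fin 3, 0 ≤ v7 i j := by
    intro i j; fin_cases i <;> fin_cases j <;> norm_num [v7, Matrix.vecHead, Matrix.vecTail]
  refine ⟨?_, ?_, ?_, ?_, ?_⟩
  · intro i
    constructor
    · refine ⟨![{0}, {1}, {2}], ⟨by decide, by decide⟩, ?_⟩
      intro j
      fin_cases i <;> fin_cases j <;> norm_num [bundleVal, v7, tau7, Matrix.vecHead, Matrix.vecTail, Matrix.cons_val_two]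
    · intro A hA
      obtain ⟨k, hk⟩ := hA.2 1
      refine ⟨k, ?_⟩
      have h1 : v7 i 1 ≤ bundleVal v7 i (A k) :=
        Finset.single_le_sum (fun j _ => vnn i j) hk
      have h2 : tau7 i ≤ v7 i 1 := by
        fin_cases i <;> norm_num [v7, tau7, Matrix.vecHead, Matrix.vecTail]
      linarith
  · intro b
    by_cases h0 : b 0 = 1
    · by_cases h1 : b 1 = 0
      · exact ⟨1, by rw [h1]; norm_num [v7, tau7, Matrix.vecHead, Matrix.vecTail]⟩
      · have h2 : b 2 = 0 := by
          obtain ⟨i, hi⟩ := b.surjective 0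
          have hi0 : i ≠ 0 := by
            intro h; rw [h, h0] at hi; exact absurd hi (by decide)
          have hi1 : i ≠ 1 := by intro h; rw [h] at hi; exact h1 hi
          have : i = 2 := by omega
          rwa [this] at hi
        exact ⟨2, by rw [h2]; norm_num [v7, tau7, Matrix.vecHead, Matrix.vecTail, Matrix.cons_val_two]⟩
    · refine ⟨0, ?_⟩
      have h3 : b 0 = 0 ∨ b 0 = 2 := by omega
      rcases h3 with h3 | h3 <;> rw [h3] <;> norm_num [v7, tau7, Matrix.vecHead, Matrix.vecTail, Matrix.cons_val_two]
  · intro b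
    by_cases h : b = Equiv.refl (Fin 3) ∨ b = Equiv.swap 1 2 <;> simp [lot7, h]
  · rw [sum_perm3 lot7 lot7_zero, lot7_refl, lot7_swap]; norm_num
  · intro i k hik j hj
    rw [prMatch_eq] at hj ⊢
    rw [filt_sum i j (fun b => v7 i (b k))]
    fin_cases i <;> fin_cases k <;> (try exact absurd rfl hik) <;> fin_cases j <;>
      simp_all [sw0, sw1, sw2] <;> norm_num [v7, Matrix.vecHead, Matrix.vecTail, Matrix.cons_val_two]
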